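/- Let k ≥ 0 and let G be a finite simple graph with n vertices and m edges. If m > C(n−1, 2) + k (where C(·,·) is the binomial coefficient), then β_k(X(G)) = 0. -/

import Mathlib

open Finset

/-- A finite abstract simplicial complex on vertex type `V`, including the empty simplex
(so that the associated chain complex is the augmented one and homology is reduced). -/
structure SimpComplex (V : Type) where
  faces : Finset (Finset V)
  empty_mem : ∅ ∈ faces
  down_closed : ∀ ⦃s t : Finset V⦄, s ∈ faces → t ⊆ s → t ∈ faces

variable {V : Type} [Fintype V] [LinearOrder V]

/-- The coefficient of the (oriented) simplex `t` in the boundary of the simplex `s`,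
using the linear order on the vertices to orient simplices. -/
def bdryCoeff (s t : Finset V) : ℤ :=
  ∑ v ∈ s, if s.erase v = t then (-1 : ℤ) ^ (s.filter (fun x => x < v)).card else 0

variable (𝕜 : Type) [Field 𝕜]

/-- The simplicial boundary operator on the total (augmented) chain module `Finset V → 𝕜`. -/
noncomputable def bdry (V : Type) [Fintype V] [LinearOrder V] :
    (Finset V → 𝕜) →ₗ[𝕜] (Finset V → 𝕜) where
  toFun f t := ∑ s : Finset V, (bdryCoeff s t : 𝕜) * f s
  map_add' f g := by
    funext t
    simp [mul_add, Finset.sum_add_distrib]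
  map_smul' c f := by
    funext t
    simp only [Pi.smul_apply, smul_eq_mul, RingHom.id_apply, Finset.mul_sum]
    exact Finset.sum_congr rfl fun s _ => by ring

/-- The submodule of chains of degree `k`, i.e. supported on faces of `K` with `k+1` vertices. -/
def degChains (K : SimpComplex V) (k : ℤ) : Submodule 𝕜 (Finset V → 𝕜) where
  carrier := {f | ∀ s : Finset V, f s ≠ 0 → s ∈ K.faces ∧ (s.card : ℤ) = k + 1}
  add_mem' := by
    intro f g hf hg s hs
    by_cases h : f s = 0
    · exact hg s (fun h2 => hs (by simp [h, h2]))
    · exact hf s h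
  zero_mem' := by intro s hs; exact absurd rfl hs
  smul_mem' := by
    intro c f hf s hs
    exact hf s (fun h => hs (by simp [h]))

/-- Reduced `k`-cycles of `K` with coefficients in `𝕜`. -/
noncomputable def cycles (K : SimpComplex V) (k : ℤ) : Submodule 𝕜 (Finset V → 𝕜) :=
  degChains 𝕜 K k ⊓ LinearMap.ker (bdry 𝕜 V)

/-- Reduced `k`-boundaries of `K` with coefficients in `𝕜`. -/
noncomputable def boundaries (K : SimpComplex V) (k : ℤ) : Submodule 𝕜 (Finset V → 𝕜) :=
  (degChains 𝕜 K (k + 1)).map (bdry 𝕜 V)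

/-- The reduced Betti number `β_k(K; 𝕜)`: the dimension of reduced simplicial homology,
realized as the quotient of the cycles by the boundaries that are cycles. -/
noncomputable def betti (K : SimpComplex V) (k : ℤ) : ℕ :=
  Module.finrank 𝕜 (↥(cycles 𝕜 K k) ⧸ ((boundaries 𝕜 K k).comap (cycles 𝕜 K k).subtype))

/-- The flag complex of a simple graph: faces are the cliques. -/
noncomputable def flagComplex (G : SimpleGraph V) : SimpComplex V where
  faces := by classical exact Finset.univ.filter (fun s => G.IsClique (s : Set V))
  empty_mem := by
    classical
    simp [Finset.mem_filter]
  down_closed := by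
    classical
    intro s t hs hts
    simp only [Finset.mem_filter, Finset.mem_univ, true_and] at hs ⊢
    exact hs.subset (by exact_mod_cast hts)

-- ==== auxiliary development ====

set_option linter.unusedSectionVars false

section SignLemmas

variable {V : Type} [LinearOrder V] {R : Type} [CommRing R]
variable [DecidableEq V]

lemma card_filter_insert_lt (u : V) {x : V} {s : Finset V} (hx : x ∉ s) :
    #((insert x s).filter (fun y => y < u)) =
      #(s.filter (fun y => y < u)) + if x < u then 1 else 0 := by
  rw [Finset.filter_insert]
  split
  · rw [Finset.card_insert_of_notMem (fun hmem => hx (Finset.mem_filter.1 hmem).1)]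
  · simp

/-- sign swap identity used in `∂∘∂ = 0`. -/
lemma eps_swap {t : Finset V} {v w : V} (hv : v ∉ t) (hw : w ∉ t) (hne : v ≠ w) :
    ((-1 : R) ^ #((insert v (insert w t)).filter (fun y => y < v))) *
      ((-1 : R) ^ #((insert w t).filter (fun y => y < w)))
    = -(((-1 : R) ^ #((insert w (insert v t)).filter (fun y => y < w))) *
        ((-1 : R) ^ #((insert v t).filter (fun y => y < v)))) := by
  have hvw : v ∉ insert w t := by simp [hne, hv]
  have hwv : w ∉ insert v t := by simp [hne.symm, hw]
  simp only [card_filter_insert_lt _ hvw, card_filter_insert_lt _ hwv,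
    card_filter_insert_lt _ hv, card_filter_insert_lt _ hw]
  rcases lt_or_gt_of_ne hne with h | h
  · simp only [if_pos h, if_neg (asymm h), if_neg (lt_irrefl v), if_neg (lt_irrefl w)]
    ring
  · simp only [if_pos h, if_neg (asymm h), if_neg (lt_irrefl v), if_neg (lt_irrefl w)]
    ring

/-- sign identity used in the cone homotopy. -/
lemma eps_cone {t : Finset V} {v w : V} (hv : v ∉ t) (hw : w ∉ t) (hne : v ≠ w) :
    ((-1 : R) ^ #((insert v (insert w t)).filter (fun y => y < v))) *
      ((-1 : R) ^ #((insert v (insert w t)).filter (fun y => y < w)))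
    = -(((-1 : R) ^ #((insert w t).filter (fun y => y < w))) *
        ((-1 : R) ^ #((insert v t).filter (fun y => y < v)))) := by
  have hvw : v ∉ insert w t := by simp [hne, hv]
  simp only [card_filter_insert_lt _ hvw, card_filter_insert_lt _ hv,
    card_filter_insert_lt _ hw]
  rcases lt_or_gt_of_ne hne with h | h
  · simp only [if_pos h, if_neg (asymm h), if_neg (lt_irrefl v), if_neg (lt_irrefl w)]
    ring
  · simp only [if_pos h, if_neg (asymm h), if_neg (lt_irrefl v), if_neg (lt_irrefl w)]
    ring

end SignLemmas


lemma bdryCoeff_cast (s t : Finset V) :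
    ((bdryCoeff s t : ℤ) : 𝕜)
      = ∑ v ∈ s, if s.erase v = t then (-1 : 𝕜) ^ #(s.filter (fun x => x < v)) else 0 := by
  unfold bdryCoeff
  push_cast
  rfl

lemma bdry_apply (f : Finset V → 𝕜) (t : Finset V) :
    bdry 𝕜 V f t = ∑ s : Finset V, (bdryCoeff s t : 𝕜) * f s := rfl

lemma sum_pick (t : Finset V) (g : Finset V → V → 𝕜) :
    ∑ s : Finset V, ∑ v ∈ s, (if s.erase v = t then g s v else 0)
      = ∑ v : V, if v ∈ t then 0 else g (insert v t) v := by
  have h1 : ∀ s : Finset V,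
      (∑ v ∈ s, (if s.erase v = t then g s v else 0))
        = ∑ v : V, if v ∈ s then (if s.erase v = t then g s v else 0) else 0 := by
    intro s
    rw [Finset.sum_ite_mem, Finset.univ_inter]
  simp only [h1]
  rw [Finset.sum_comm]
  refine Finset.sum_congr rfl fun v _ => ?_
  by_cases hv : v ∈ t
  · rw [if_pos hv]
    refine Finset.sum_eq_zero fun s _ => ?_
    by_cases hvs : v ∈ s
    · rw [if_pos hvs]
      by_cases hst : s.erase v = t
      · exact absurd (hst ▸ hv) (Finset.notMem_erase v s)
      · rw [if_neg hst]
    · rw [if_neg hvs]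
  · rw [if_neg hv]
    rw [Finset.sum_eq_single (insert v t) (fun s _ hne => ?_)
      (fun h => absurd (Finset.mem_univ _) h)]
    · rw [if_pos (Finset.mem_insert_self v t), if_pos (Finset.erase_insert hv)]
    · by_cases hvs : v ∈ s
      · rw [if_pos hvs]
        have : s.erase v ≠ t := fun h => hne (by rw [← h, Finset.insert_erase hvs])
       
        rw [if_neg this]
      · rw [if_neg hvs]

lemma bdry_apply' (f : Finset V → 𝕜) (t : Finset V) :
    bdry 𝕜 V f t
      = ∑ v : V, if v ∈ t then 0
          else (-1 : 𝕜) ^ #((insert v t).filter (fun x => x < v)) * f (insert v t) := by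
  rw [bdry_apply]
  have : ∀ s : Finset V, (bdryCoeff s t : 𝕜) * f s
      = ∑ v ∈ s, (if s.erase v = t then (-1 : 𝕜) ^ #(s.filter (fun x => x < v)) * f s else 0) := by
    intro s
    rw [bdryCoeff_cast, Finset.sum_mul]
    exact Finset.sum_congr rfl fun v _ => by rw [ite_mul, zero_mul]
  simp only [this]
  exact sum_pick 𝕜 t (fun s v => (-1 : 𝕜) ^ #(s.filter (fun x => x < v)) * f s)

lemma bdry_support {f : Finset V → 𝕜} {t : Finset V} (h : bdry 𝕜 V f t ≠ 0) :
    ∃ s v, v ∈ s ∧ s.erase v = t ∧ f s ≠ 0 := by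
  by_contra hc
  push_neg at hc
  apply h
  rw [bdry_apply]
  refine Finset.sum_eq_zero fun s _ => ?_
  by_cases hf : f s = 0
  · rw [hf, mul_zero]
  · have : bdryCoeff s t = 0 := by
      unfold bdryCoeff
      refine Finset.sum_eq_zero fun v hv => ?_
      rw [if_neg (fun hst => hf (hc s v hv hst))]
    rw [this]
    simp

lemma eps_swap' {s : Finset V} {v w : V} (hvs : v ∈ s) (hws : w ∈ s) (hvw : v ≠ w) :
    (-1 : 𝕜) ^ #(s.filter (fun x => x < v))
      * (-1 : 𝕜) ^ #((s.erase v).filter (fun x => x < w))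
    = -((-1 : 𝕜) ^ #(s.filter (fun x => x < w))
      * (-1 : 𝕜) ^ #((s.erase w).filter (fun x => x < v))) := by
  classical
  have hws' : w ∈ s.erase v := Finset.mem_erase.2 ⟨hvw.symm, hws⟩
  have hvs' : v ∈ s.erase w := Finset.mem_erase.2 ⟨hvw, hvs⟩
  set t' := (s.erase v).erase w with ht'
  have h1 : s.erase v = insert w t' := (Finset.insert_erase hws').symm
  have h2 : s.erase w = insert v t' := by
    rw [ht', Finset.erase_right_comm]
    exact (Finset.insert_erase hvs').symm
  have h3 : s = insert v (insert w t') := by rw [← h1, Finset.insert_erase hvs]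
  have h4 : s = insert w (insert v t') := by rw [← h2, Finset.insert_erase hws]
  have hvt : v ∉ t' := by
    rw [ht', Finset.erase_right_comm]
    exact Finset.notMem_erase v _
  have hwt : w ∉ t' := Finset.notMem_erase w _
  calc (-1 : 𝕜) ^ #(s.filter (fun x => x < v))
        * (-1 : 𝕜) ^ #((s.erase v).filter (fun x => x < w))
      = (-1 : 𝕜) ^ #((insert v (insert w t')).filter (fun x => x < v))
        * (-1 : 𝕜) ^ #((insert w t').filter (fun x => x < w)) := by rw [← h3, ← h1]
    _ = -((-1 : 𝕜) ^ #((insert w (insert v t')).filter (fun x => x < w))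
        * (-1 : 𝕜) ^ #((insert v t').filter (fun x => x < v))) :=
        eps_swap hvt hwt hvw
    _ = -((-1 : 𝕜) ^ #(s.filter (fun x => x < w))
        * (-1 : 𝕜) ^ #((s.erase w).filter (fun x => x < v))) := by rw [← h4, ← h2]

lemma key_coeff (s r : Finset V) :
    ∑ t : Finset V, (bdryCoeff s t : 𝕜) * (bdryCoeff t r : 𝕜) = 0 := by
  classical
  have step1 : ∀ t : Finset V, (bdryCoeff s t : 𝕜) * (bdryCoeff t r : 𝕜)
      = ∑ v ∈ s, (if s.erase v = t
          then (-1 : 𝕜) ^ #(s.filter (fun x => x < v)) * (bdryCoeff t r : 𝕜) else 0) := by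
    intro t
    rw [bdryCoeff_cast, Finset.sum_mul]
    exact Finset.sum_congr rfl fun v _ => by rw [ite_mul, zero_mul]
  simp only [step1]
  rw [Finset.sum_comm]
  have step2 : ∀ v ∈ s,
      (∑ t : Finset V, if s.erase v = t
          then (-1 : 𝕜) ^ #(s.filter (fun x => x < v)) * (bdryCoeff t r : 𝕜) else 0)
      = (-1 : 𝕜) ^ #(s.filter (fun x => x < v)) * (bdryCoeff (s.erase v) r : 𝕜) := by
    intro v _
    rw [Finset.sum_ite_eq univ (s.erase v)
      (fun t => (-1 : 𝕜) ^ #(s.filter (fun x => x < v)) * (bdryCoeff t r : 𝕜)),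
      if_pos (Finset.mem_univ _)]
  rw [Finset.sum_congr rfl step2]
  have step3 : ∀ v ∈ s,
      (-1 : 𝕜) ^ #(s.filter (fun x => x < v)) * (bdryCoeff (s.erase v) r : 𝕜)
      = ∑ w ∈ s, (if w = v then 0 else
          (if (s.erase v).erase w = r
            then (-1 : 𝕜) ^ #(s.filter (fun x => x < v))
              * (-1 : 𝕜) ^ #((s.erase v).filter (fun x => x < w)) else 0)) := by
    intro v hv
    rw [bdryCoeff_cast, Finset.mul_sum]
    rw [← Finset.sum_erase s (f := fun w => if w = v then (0:𝕜) else
          (if (s.erase v).erase w = r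
            then (-1 : 𝕜) ^ #(s.filter (fun x => x < v))
              * (-1 : 𝕜) ^ #((s.erase v).filter (fun x => x < w)) else 0)) (if_pos rfl)]
    refine Finset.sum_congr rfl fun w hw => ?_
    rw [if_neg (Finset.mem_erase.1 hw).1, mul_ite, mul_zero]
  rw [Finset.sum_congr rfl step3, ← Finset.sum_product']
  refine Finset.sum_involution (fun p _ => p.swap) (fun p hp => ?_) (fun p hp hne => ?_)
    (fun p hp => ?_) (fun p hp => rfl)
  · rcases p with ⟨v, w⟩
    dsimp only [Prod.swap]
    by_cases hvw : w = v
    · rw [if_pos hvw, if_pos hvw.symm, add_zero]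
    · rw [if_neg hvw, if_neg (Ne.symm hvw)]
      by_cases hcond : (s.erase v).erase w = r
      · rw [if_pos hcond, if_pos (Finset.erase_right_comm (s := s) ▸ hcond)]
        have hvs : v ∈ s := (Finset.mem_product.1 hp).1
        have hws : w ∈ s := (Finset.mem_product.1 hp).2
        rw [eps_swap' 𝕜 hvs hws (Ne.symm hvw)]
        ring
      · rw [if_neg hcond,
          if_neg (fun h => hcond (Finset.erase_right_comm (s := s) ▸ h)), add_zero]
  · rcases p with ⟨v, w⟩
    intro hsw
    have hwv : w ≠ v := by
      intro h
      rw [if_pos h] at hne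
      exact hne rfl
    have : w = v := congrArg Prod.fst hsw
    exact hwv this
  · rcases Finset.mem_product.1 hp with ⟨h1, h2⟩
    exact Finset.mem_product.2 ⟨h2, h1⟩

lemma bdry_bdry (f : Finset V → 𝕜) : bdry 𝕜 V (bdry 𝕜 V f) = 0 := by
  classical
  funext r
  show ∑ t : Finset V, (bdryCoeff t r : 𝕜) * bdry 𝕜 V f t = 0
  have : ∀ t : Finset V, (bdryCoeff t r : 𝕜) * bdry 𝕜 V f t
      = ∑ s : Finset V, (bdryCoeff s t : 𝕜) * (bdryCoeff t r : 𝕜) * f s := by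
    intro t
    rw [bdry_apply, Finset.mul_sum]
    exact Finset.sum_congr rfl fun s _ => by ring
  simp only [this]
  rw [Finset.sum_comm]
  refine Finset.sum_eq_zero fun s _ => ?_
  rw [← Finset.sum_mul, key_coeff, zero_mul]


noncomputable def cone (v₀ : V) (f : Finset V → 𝕜) : Finset V → 𝕜 :=
  fun s => if v₀ ∈ s then (-1 : 𝕜) ^ #(s.filter (fun x => x < v₀)) * f (s.erase v₀) else 0

lemma bdry_cone_add (v₀ : V) (f : Finset V → 𝕜) :
    bdry 𝕜 V (cone 𝕜 v₀ f) + cone 𝕜 v₀ (bdry 𝕜 V f) = f := by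
  classical
  funext t
  show bdry 𝕜 V (cone 𝕜 v₀ f) t + cone 𝕜 v₀ (bdry 𝕜 V f) t = f t
  rw [bdry_apply']
  by_cases hv₀ : v₀ ∈ t
  · -- main case
    have hB : cone 𝕜 v₀ (bdry 𝕜 V f) t
        = (-1 : 𝕜) ^ #(t.filter (fun x => x < v₀)) *
            ∑ v : V, (if v ∈ t.erase v₀ then 0
              else (-1 : 𝕜) ^ #((insert v (t.erase v₀)).filter (fun x => x < v))
                * f (insert v (t.erase v₀))) := by
      rw [cone, if_pos hv₀, bdry_apply']
    rw [hB, Finset.mul_sum]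
    rw [← Finset.sum_add_distrib]
    -- split off the v₀ term
    rw [← Finset.sum_erase_add univ _ (Finset.mem_univ v₀)]
    have hterm : (if v₀ ∈ t then (0:𝕜)
          else (-1 : 𝕜) ^ #((insert v₀ t).filter (fun x => x < v₀)) * cone 𝕜 v₀ f (insert v₀ t))
        + (-1 : 𝕜) ^ #(t.filter (fun x => x < v₀)) *
            (if v₀ ∈ t.erase v₀ then 0
              else (-1 : 𝕜) ^ #((insert v₀ (t.erase v₀)).filter (fun x => x < v₀))
                * f (insert v₀ (t.erase v₀)))
        = f t := by
      rw [if_pos hv₀, if_neg (Finset.notMem_erase v₀ t), Finset.insert_erase hv₀, zero_add,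
        ← mul_assoc, ← pow_add, Even.neg_one_pow ⟨_, rfl⟩, one_mul]
    rw [hterm]
    have hrest : ∀ v ∈ univ.erase v₀,
        ((if v ∈ t then (0:𝕜)
          else (-1 : 𝕜) ^ #((insert v t).filter (fun x => x < v)) * cone 𝕜 v₀ f (insert v t))
        + (-1 : 𝕜) ^ #(t.filter (fun x => x < v₀)) *
            (if v ∈ t.erase v₀ then 0
              else (-1 : 𝕜) ^ #((insert v (t.erase v₀)).filter (fun x => x < v))
                * f (insert v (t.erase v₀)))) = 0 := by
      intro v hv
      have hvne : v ≠ v₀ := (Finset.mem_erase.1 hv).1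
      by_cases hvt : v ∈ t
      · rw [if_pos hvt, if_pos (Finset.mem_erase.2 ⟨hvne, hvt⟩), mul_zero, add_zero]
      · rw [if_neg hvt, if_neg (fun h => hvt (Finset.mem_of_mem_erase h))]
        have hins : v₀ ∈ insert v t := Finset.mem_insert_of_mem hv₀
        rw [cone, if_pos hins]
        have herase : (insert v t).erase v₀ = insert v (t.erase v₀) :=
          Finset.erase_insert_of_ne hvne
        rw [herase]
        -- sign identity : use eps_cone with t' := t.erase v₀
        have hv₀t' : v₀ ∉ t.erase v₀ := Finset.notMem_erase v₀ t
        have hvt' : v ∉ t.erase v₀ := fun h => hvt (Finset.mem_of_mem_erase h)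
        have hins2 : insert v₀ (t.erase v₀) = t := Finset.insert_erase hv₀
        have hkey := eps_cone (t := t.erase v₀) (v := v) (w := v₀) (R := 𝕜) hvt' hv₀t' hvne
        rw [hins2] at hkey
        calc (-1 : 𝕜) ^ #((insert v t).filter (fun x => x < v)) *
              ((-1 : 𝕜) ^ #((insert v t).filter (fun x => x < v₀)) *
                f (insert v (t.erase v₀)))
              + (-1 : 𝕜) ^ #(t.filter (fun x => x < v₀)) *
                ((-1 : 𝕜) ^ #((insert v (t.erase v₀)).filter (fun x => x < v))
                  * f (insert v (t.erase v₀)))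
            = ((-1 : 𝕜) ^ #((insert v t).filter (fun x => x < v)) *
                (-1 : 𝕜) ^ #((insert v t).filter (fun x => x < v₀))
              + (-1 : 𝕜) ^ #(t.filter (fun x => x < v₀)) *
                (-1 : 𝕜) ^ #((insert v (t.erase v₀)).filter (fun x => x < v)))
                * f (insert v (t.erase v₀)) := by ring
          _ = 0 := by
              rw [hkey]
              ring
    rw [Finset.sum_congr rfl hrest, Finset.sum_const_zero, zero_add]
  · -- v₀ ∉ t : cone part vanishes, boundary sum has single term v = v₀
    have hB : cone 𝕜 v₀ (bdry 𝕜 V f) t = 0 := by rw [cone, if_neg hv₀]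
    rw [hB, add_zero]
    rw [Finset.sum_eq_single v₀ (fun v _ hne => ?_) (fun h => absurd (Finset.mem_univ _) h)]
    · rw [if_neg hv₀, cone, if_pos (Finset.mem_insert_self v₀ t), Finset.erase_insert hv₀,
        ← mul_assoc, ← pow_add, Even.neg_one_pow ⟨_, rfl⟩, one_mul]
    · by_cases hvt : v ∈ t
      · rw [if_pos hvt]
      · rw [if_neg hvt, cone,
          if_neg (by simp [Finset.mem_insert, hv₀, Ne.symm hne]), mul_zero]

noncomputable def nonEdges {V : Type} [LinearOrder V] (G : SimpleGraph V) (S : Finset V) :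
    Finset (Finset V) := by
  classical exact (S.powersetCard 2).filter (fun p => ¬ G.IsClique (p : Set V))

lemma mem_nonEdges {V : Type} [LinearOrder V] {G : SimpleGraph V} {S p : Finset V} :
    p ∈ nonEdges G S ↔ p ⊆ S ∧ #p = 2 ∧ ¬ G.IsClique (p : Set V) := by
  classical
  simp [nonEdges, Finset.mem_filter, Finset.mem_powersetCard, and_assoc]

lemma nonEdges_mono {V : Type} [LinearOrder V] {G : SimpleGraph V} {S T : Finset V}
    (h : T ⊆ S) : nonEdges G T ⊆ nonEdges G S := by
  intro p hp
  rw [mem_nonEdges] at hp ⊢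
  exact ⟨hp.1.trans h, hp.2⟩

lemma master (G : SimpleGraph V) :
    ∀ (N : ℕ) (S : Finset V), S.card ≤ N → ∀ (k : ℕ),
      #(nonEdges G S) + k + 2 ≤ S.card →
      ∀ z : Finset V → 𝕜,
        (∀ s, z s ≠ 0 → G.IsClique (s : Set V) ∧ s ⊆ S ∧ s.card = k + 1) →
        bdry 𝕜 V z = 0 →
        ∃ y : Finset V → 𝕜,
          (∀ s, y s ≠ 0 → G.IsClique (s : Set V) ∧ s ⊆ S ∧ s.card = k + 2) ∧
            bdry 𝕜 V y = z := by
  intro N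
  induction N with
  | zero =>
    intro S hS k hcount
    omega
  | succ N ih =>
    intro S hS k hcount z hsupp hz
    by_cases hcl : G.IsClique (S : Set V)
    · -- S is a clique : cone
      obtain ⟨v₀, hv₀⟩ : S.Nonempty := Finset.card_pos.1 (by omega)
      refine ⟨cone 𝕜 v₀ z, ?_, ?_⟩
      · intro s hs
        have hmem : v₀ ∈ s := by
          by_contra h
          rw [cone, if_neg h] at hs
          exact hs rfl
        have hz' : z (s.erase v₀) ≠ 0 := by
          rw [cone, if_pos hmem] at hs
          exact right_ne_zero_of_mul hs
        obtain ⟨-, hsub, hcard⟩ := hsupp _ hz'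
        have hssub : s ⊆ S := by
          intro x hx
          by_cases hxv : x = v₀
          · exact hxv ▸ hv₀
          · exact hsub (Finset.mem_erase.2 ⟨hxv, hx⟩)
        refine ⟨hcl.subset (by exact_mod_cast Finset.coe_subset.2 hssub), hssub, ?_⟩
        have := Finset.card_erase_of_mem hmem
        have hpos : 1 ≤ s.card := Finset.card_pos.2 ⟨v₀, hmem⟩
        omega
      · have hid := bdry_cone_add 𝕜 v₀ z
        rw [hz] at hid
        have c0 : cone 𝕜 v₀ (0 : Finset V → 𝕜) = 0 := by
          funext s
          rw [cone]
          split <;> simp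
        rw [c0, add_zero] at hid
        exact hid
    · -- there is a non-edge in S
      rw [SimpleGraph.isClique_iff, Set.Pairwise] at hcl
      push_neg at hcl
      obtain ⟨u, hu, v, hv, huv, hadj⟩ := hcl
      rw [Finset.mem_coe] at hu hv
      have hpair : ({u, v} : Finset V) ∈ nonEdges G S := by
        rw [mem_nonEdges]
        refine ⟨?_, Finset.card_pair huv, ?_⟩
        · intro x hx
          rcases Finset.mem_insert.1 hx with rfl | hx
          · exact hu
          · exact (Finset.mem_singleton.1 hx) ▸ hv
        · rw [Finset.coe_insert, Finset.coe_singleton, SimpleGraph.isClique_pair]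
          exact fun h => hadj (h huv)
      have hmono : ∀ T : Finset V, T ⊆ S → (u ∉ T ∨ v ∉ T) →
          #(nonEdges G T) + 1 ≤ #(nonEdges G S) := by
        intro T hTS hx
        have hsub2 : nonEdges G T ⊆ (nonEdges G S).erase {u, v} := by
          intro p hp
          refine Finset.mem_erase.2 ⟨?_, nonEdges_mono hTS hp⟩
          intro heq
          have hpT := (mem_nonEdges.1 hp).1
          rcases hx with hx | hx
          · exact hx (hpT (heq ▸ Finset.mem_insert_self u {v}))
          · exact hx (hpT (heq ▸ Finset.mem_insert_of_mem (Finset.mem_singleton_self v)))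
        have := Finset.card_le_card hsub2
        rw [Finset.card_erase_of_mem hpair] at this
        have hple : 1 ≤ #(nonEdges G S) := Finset.card_pos.2 ⟨_, hpair⟩
        omega
      -- cardinalities
      have hvS' : v ∈ S.erase u := Finset.mem_erase.2 ⟨Ne.symm huv, hv⟩
      have hc1 : (S.erase u).card = S.card - 1 := Finset.card_erase_of_mem hu
      have hc2 : (S.erase v).card = S.card - 1 := Finset.card_erase_of_mem hv
      have hc3 : ((S.erase u).erase v).card = S.card - 2 := by
        rw [Finset.card_erase_of_mem hvS', hc1]
        omega
      have hSpos : 3 ≤ S.card := by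
        have := Finset.card_pos.2 ⟨_, hpair⟩
        omega
      -- split z
      set zB : Finset V → 𝕜 := fun s => if u ∈ s then z s else 0 with hzB
      set zA : Finset V → 𝕜 := fun s => if u ∈ s then 0 else z s with hzA
      have hsplit : z = zA + zB := by
        funext s
        by_cases h : u ∈ s <;> simp [hzA, hzB, h]
      have hsuppA : ∀ s, zA s ≠ 0 →
          G.IsClique (s : Set V) ∧ s ⊆ S.erase u ∧ s.card = k + 1 := by
        intro s hs
        have h : u ∉ s := by
          intro h
          rw [hzA] at hs
          simp only [if_pos h] at hs
          exact hs rfl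
        have h' : z s ≠ 0 := by
          rw [hzA] at hs
          simpa only [if_neg h] using hs
        obtain ⟨h1, h2, h3⟩ := hsupp s h'
        exact ⟨h1, fun x hx => Finset.mem_erase.2 ⟨fun e => h (e ▸ hx), h2 hx⟩, h3⟩
      have hsuppB : ∀ s, zB s ≠ 0 →
          G.IsClique (s : Set V) ∧ s ⊆ S.erase v ∧ s.card = k + 1 := by
        intro s hs
        have h : u ∈ s := by
          by_contra h
          rw [hzB] at hs
          simp only [if_neg h] at hs
          exact hs rfl
        have h' : z s ≠ 0 := by
          rw [hzB] at hs
          simpa only [if_pos h] using hs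
        obtain ⟨h1, h2, h3⟩ := hsupp s h'
        have hvs : v ∉ s := by
          intro hvs
          exact hadj (h1 (Finset.mem_coe.2 h) (Finset.mem_coe.2 hvs) huv)
        exact ⟨h1, fun x hx => Finset.mem_erase.2 ⟨fun e => hvs (e ▸ hx), h2 hx⟩, h3⟩
      set w : Finset V → 𝕜 := bdry 𝕜 V zA with hw
      have hwB : bdry 𝕜 V zB = -w := by
        have hsum : bdry 𝕜 V zA + bdry 𝕜 V zB = 0 := by
          rw [← map_add, ← hsplit, hz]
        rw [hw]
        have := eq_neg_of_add_eq_zero_right hsum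
        rw [this]
      have hsuppw : ∀ t, w t ≠ 0 →
          G.IsClique (t : Set V) ∧ t ⊆ (S.erase u).erase v ∧ t.card = k := by
        intro t ht
        obtain ⟨s, x, hxs, hst, hfs⟩ := bdry_support 𝕜 (hw ▸ ht)
        obtain ⟨h1, h2, h3⟩ := hsuppA s hfs
        have htsub : t ⊆ s := hst ▸ Finset.erase_subset x s
        have htcard : t.card = k := by
          rw [← hst, Finset.card_erase_of_mem hxs, h3]
          omega
        have ht2 : bdry 𝕜 V zB t ≠ 0 := by
          rw [hwB]
          simpa using ht
        obtain ⟨s', x', hx's', hs't, hfs'⟩ := bdry_support 𝕜 ht2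
        obtain ⟨-, h2', -⟩ := hsuppB s' hfs'
        have htsub' : t ⊆ s' := hs't ▸ Finset.erase_subset x' s'
        refine ⟨h1.subset (by exact_mod_cast Finset.coe_subset.2 htsub), ?_, htcard⟩
        intro y hy
        have hyu : y ∈ S.erase u := h2 (htsub hy)
        have hyv : y ∈ S.erase v := h2' (htsub' hy)
        exact Finset.mem_erase.2 ⟨(Finset.mem_erase.1 hyv).1, hyu⟩
      have hwz : bdry 𝕜 V w = 0 := by
        rw [hw]
        exact bdry_bdry 𝕜 zA
      -- find y with ∂y = w supported in (S.erase u).erase v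
      obtain ⟨y, hsuppy, hy⟩ : ∃ y : Finset V → 𝕜,
          (∀ s, y s ≠ 0 →
            G.IsClique (s : Set V) ∧ s ⊆ (S.erase u).erase v ∧ s.card = k + 1) ∧
          bdry 𝕜 V y = w := by
        rcases k with _ | k'
        · -- k = 0 : w is supported on ∅
          obtain ⟨x, hx⟩ : ((S.erase u).erase v).Nonempty := Finset.card_pos.1 (by omega)
          refine ⟨fun s => if s = {x} then w ∅ else 0, ?_, ?_⟩
          · intro s hs
            have hs' : (if s = {x} then w ∅ else 0) ≠ 0 := hs
            have hsx : s = {x} := by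
              by_contra h
              rw [if_neg h] at hs'
              exact hs' rfl
            subst hsx
            refine ⟨by rw [Finset.coe_singleton]; exact G.isClique_singleton x,
              Finset.singleton_subset_iff.2 hx, Finset.card_singleton x⟩
          · funext t
            rw [bdry_apply]
            show (∑ s : Finset V, (bdryCoeff s t : 𝕜) * (if s = {x} then w ∅ else 0)) = w t
            rw [Finset.sum_eq_single ({x} : Finset V) (fun s _ hne => by rw [if_neg hne, mul_zero])
              (fun h => absurd (Finset.mem_univ _) h)]
            rw [if_pos rfl]
            have hcx : bdryCoeff {x} t = if t = ∅ then 1 else 0 := by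
              unfold bdryCoeff
              rw [Finset.sum_singleton, Finset.erase_singleton]
              by_cases ht : t = ∅
              · rw [if_pos ht.symm, if_pos ht]
                simp [Finset.filter_singleton]
              · rw [if_neg (fun h => ht h.symm), if_neg ht]
            rw [hcx]
            by_cases ht : t = ∅
            · rw [if_pos ht, ht]
              simp
            · rw [if_neg ht, Int.cast_zero, zero_mul]
              by_contra hwt
              have := (hsuppw t (Ne.symm hwt)).2.2
              exact ht (Finset.card_eq_zero.1 this)
        · -- k = k' + 1 : recurse in dimension k'
          have hcount' : #(nonEdges G ((S.erase u).erase v)) + k' + 2 ≤ ((S.erase u).erase v).card := by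
            have := hmono ((S.erase u).erase v)
              ((Finset.erase_subset v (S.erase u)).trans (Finset.erase_subset u S))
              (Or.inl (fun h => Finset.notMem_erase u S (Finset.mem_of_mem_erase h)))
            omega
          exact ih ((S.erase u).erase v) (by omega) k' hcount' w hsuppw hwz
      -- recurse on S.erase u with zA - y
      obtain ⟨a, hsuppa, ha⟩ := ih (S.erase u) (by omega) k
        (by have := hmono (S.erase u) (Finset.erase_subset u S) (Or.inl (Finset.notMem_erase u S)); omega)
        (zA - y)
        (by
          intro s hs
          by_cases hA : zA s = 0
          · have hy' : y s ≠ 0 := by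
              intro h0
              apply hs
              simp [Pi.sub_apply, hA, h0]
            obtain ⟨h1, h2, h3⟩ := hsuppy s hy'
            exact ⟨h1, h2.trans (Finset.erase_subset v (S.erase u)), h3⟩
          · exact hsuppA s hA)
        (by rw [map_sub, hy, hw, sub_self])
      -- recurse on S.erase v with zB + y
      obtain ⟨b, hsuppb, hb⟩ := ih (S.erase v) (by omega) k
        (by have := hmono (S.erase v) (Finset.erase_subset v S) (Or.inr (Finset.notMem_erase v S)); omega)
        (zB + y)
        (by
          intro s hs
          by_cases hB : zB s = 0
          · have hy' : y s ≠ 0 := by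
              intro h0
              apply hs
              simp [Pi.add_apply, hB, h0]
            obtain ⟨h1, h2, h3⟩ := hsuppy s hy'
            refine ⟨h1, ?_, h3⟩
            intro x hx
            have := Finset.mem_erase.1 (h2 hx)
            exact Finset.mem_erase.2 ⟨this.1, Finset.mem_of_mem_erase this.2⟩
          · exact hsuppB s hB)
        (by rw [map_add, hwB, hy, neg_add_cancel])
      refine ⟨a + b, ?_, ?_⟩
      · intro s hs
        by_cases hA : a s = 0
        · have hb' : b s ≠ 0 := by
            intro h0
            apply hs
            simp [Pi.add_apply, hA, h0]
          obtain ⟨h1, h2, h3⟩ := hsuppb s hb'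
          exact ⟨h1, h2.trans (Finset.erase_subset v S), h3⟩
        · obtain ⟨h1, h2, h3⟩ := hsuppa s hA
          exact ⟨h1, h2.trans (Finset.erase_subset u S), h3⟩
      · rw [map_add, ha, hb, hsplit]
        abel

noncomputable def pairFinset {V : Type} [DecidableEq V] : Sym2 V → Finset V :=
  Sym2.lift ⟨fun x y => {x, y}, fun x y => Finset.pair_comm x y⟩

lemma exists_boundary_univ (G : SimpleGraph V) (n m k : ℕ)
    (hn : Fintype.card V = n) (hm : Nat.card G.edgeSet = m)
    (h : Nat.choose (n - 1) 2 + k < m) :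
    ∀ z : Finset V → 𝕜,
      (∀ s, z s ≠ 0 → G.IsClique (s : Set V) ∧ s ⊆ (univ : Finset V) ∧ s.card = k + 1) →
      bdry 𝕜 V z = 0 →
      ∃ y : Finset V → 𝕜,
        (∀ s, y s ≠ 0 → G.IsClique (s : Set V) ∧ s ⊆ (univ : Finset V) ∧ s.card = k + 2) ∧
          bdry 𝕜 V y = z := by
  classical
  have hmm : m = #G.edgeFinset := by
    rw [← hm, Nat.card_coe_set_eq, Set.ncard_eq_toFinset_card']
    congr 1
  have hcompl : #Gᶜ.edgeFinset = #(nonEdges G (univ : Finset V)) := by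
    refine Finset.card_bij (fun e _ => pairFinset e) ?_ ?_ ?_
    · intro e he
      induction e with
      | _ x y =>
        show pairFinset s(x, y) ∈ nonEdges G univ
        have hadj : Gᶜ.Adj x y := (SimpleGraph.mem_edgeSet _).1 (SimpleGraph.mem_edgeFinset.1 he)
        obtain ⟨hne, hnadj⟩ := (SimpleGraph.compl_adj G x y).1 hadj
        have hpf : pairFinset s(x, y) = ({x, y} : Finset V) := rfl
        rw [hpf, mem_nonEdges]
        refine ⟨Finset.subset_univ _, Finset.card_pair hne, ?_⟩
        rw [Finset.coe_insert, Finset.coe_singleton]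
        intro hcl
        exact hnadj (SimpleGraph.isClique_pair.1 hcl hne)
    · intro e₁ h₁ e₂ h₂ heq
      induction e₁ with
      | _ x y =>
        induction e₂ with
        | _ a b =>
          have hne₁ : x ≠ y :=
            ((SimpleGraph.compl_adj G x y).1
              ((SimpleGraph.mem_edgeSet _).1 (SimpleGraph.mem_edgeFinset.1 h₁))).1
          have heq' : ({x, y} : Finset V) = {a, b} := heq
          have hx : x ∈ ({a, b} : Finset V) := heq' ▸ Finset.mem_insert_self x {y}
          have hy : y ∈ ({a, b} : Finset V) :=
            heq' ▸ Finset.mem_insert_of_mem (Finset.mem_singleton_self y)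
          rw [Sym2.eq_iff]
          rcases Finset.mem_insert.1 hx with rfl | hx'
          · rcases Finset.mem_insert.1 hy with rfl | hy'
            · exact absurd rfl hne₁
            · exact Or.inl ⟨rfl, Finset.mem_singleton.1 hy'⟩
          · rcases Finset.mem_insert.1 hy with rfl | hy'
            · exact Or.inr ⟨Finset.mem_singleton.1 hx', rfl⟩
            · exact absurd ((Finset.mem_singleton.1 hx').trans
                (Finset.mem_singleton.1 hy').symm) hne₁
    · intro p hp
      obtain ⟨hsub, hcard2, hncl⟩ := mem_nonEdges.1 hp
      obtain ⟨x, y, hne, rfl⟩ := Finset.card_eq_two.1 hcard2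
      refine ⟨s(x, y), ?_, rfl⟩
      rw [SimpleGraph.mem_edgeFinset, SimpleGraph.mem_edgeSet, SimpleGraph.compl_adj]
      refine ⟨hne, fun hadj => hncl ?_⟩
      rw [Finset.coe_insert, Finset.coe_singleton]
      exact SimpleGraph.isClique_pair.2 fun _ => hadj
  have htot : #G.edgeFinset + #Gᶜ.edgeFinset = n.choose 2 := by
    rw [← hn, ← SimpleGraph.card_edgeFinset_top_eq_card_choose_two,
      ← Finset.card_union_of_disjoint (SimpleGraph.disjoint_edgeFinset.2 disjoint_compl_right)]
    congr 1
    ext e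
    induction e with
    | _ x y =>
      simp only [Finset.mem_union, SimpleGraph.mem_edgeFinset, SimpleGraph.mem_edgeSet,
        SimpleGraph.compl_adj, SimpleGraph.top_adj]
      by_cases hxy : x = y
      · simp [hxy]
      · by_cases hadj : G.Adj x y <;> simp [hxy, hadj]
  have hcard_univ : #(univ : Finset V) = n := by rw [Finset.card_univ, hn]
  have e1 : m + #(nonEdges G (univ : Finset V)) = n.choose 2 := by
    rw [hmm, ← hcompl]
    exact htot
  have hcnt : #(nonEdges G (univ : Finset V)) + k + 2 ≤ #(univ : Finset V) := by
    rcases n with _ | n'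
    · have h0 : Nat.choose 0 2 = 0 := rfl
      have h1 : Nat.choose (0 - 1) 2 = 0 := rfl
      omega
    · have hch : (n' + 1).choose 2 = n'.choose 2 + n' := by
        have hcss := Nat.choose_succ_succ' n' 1
        norm_num [Nat.choose_one_right] at hcss
        omega
      have hn1 : n' + 1 - 1 = n' := rfl
      rw [hn1] at h
      omega
  exact fun z hs hz => master 𝕜 G (#(univ : Finset V)) univ le_rfl k hcnt z hs hz


lemma mem_faces_flagComplex {G : SimpleGraph V} {s : Finset V} :
    s ∈ (flagComplex G).faces ↔ G.IsClique (s : Set V) := by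
  classical
  simp [flagComplex]

/-- If a graph `G` on `n` vertices has `m > C(n-1, 2) + k` edges, then
`β_k(X(G)) = 0`. -/
theorem betti_flagComplex_eq_zero_of_many_edges
    (𝕜 : Type) [Field 𝕜] {V : Type} [Fintype V] [LinearOrder V]
    (G : SimpleGraph V) (n m k : ℕ)
    (hn : Fintype.card V = n) (hm : Nat.card G.edgeSet = m)
    (h : Nat.choose (n - 1) 2 + k < m) :
    betti 𝕜 (flagComplex G) k = 0 := by
  classical
  have htop : ((boundaries 𝕜 (flagComplex G) k).comap
      (cycles 𝕜 (flagComplex G) k).subtype) = ⊤ := by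
    rw [Submodule.eq_top_iff']
    intro x
    rw [Submodule.mem_comap, Submodule.subtype_apply]
    obtain ⟨hdeg, hker⟩ := Submodule.mem_inf.1 x.2
    have hker' : bdry 𝕜 V (x : Finset V → 𝕜) = 0 := LinearMap.mem_ker.1 hker
    simp only [degChains, Submodule.mem_mk, AddSubmonoid.mem_mk, AddSubsemigroup.mem_mk,
      Set.mem_setOf_eq] at hdeg
    have hdeg' : ∀ s : Finset V, (x : Finset V → 𝕜) s ≠ 0 →
        G.IsClique (s : Set V) ∧ s ⊆ (univ : Finset V) ∧ s.card = k + 1 := by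
      intro s hs
      obtain ⟨hface, hcard⟩ := hdeg s hs
      refine ⟨mem_faces_flagComplex.1 hface, Finset.subset_univ s, ?_⟩
      exact_mod_cast hcard
    obtain ⟨y, hsuppy, hy⟩ := exists_boundary_univ 𝕜 G n m k hn hm h
      (x : Finset V → 𝕜) hdeg' hker'
    rw [boundaries, Submodule.mem_map]
    refine ⟨y, ?_, hy⟩
    simp only [degChains, Submodule.mem_mk, AddSubmonoid.mem_mk, AddSubsemigroup.mem_mk,
      Set.mem_setOf_eq]
    intro s hs
    obtain ⟨h1, -, h3⟩ := hsuppy s hs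
    refine ⟨mem_faces_flagComplex.2 h1, ?_⟩
    rw [h3]
    push_cast
    ring
  unfold betti
  rw [htop]
  haveI : Subsingleton
      ((↥(cycles 𝕜 (flagComplex G) ↑k)) ⧸ (⊤ : Submodule 𝕜 ↥(cycles 𝕜 (flagComplex G) ↑k))) :=
    by obtain ⟨u⟩ := (Submodule.unique_quotient_iff_eq_top (p := (⊤ : Submodule 𝕜 ↥(cycles 𝕜 (flagComplex G) ↑k)))).2 rfl; infer_instance
  exact Module.finrank_zero_of_subsingleton
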